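/- Let 𝔖 be a finite step set in ℤ² and let p be the smallest positive integer such that some 𝔖-path from (0,0) ends at (p,0). Then the number of walks of length n on the half plane avoiding the half line (paths with steps in 𝔖 starting at (0,0), never visiting any point with negative y-coordinate, never visiting any point (-k,0) with k ≥ 0 after the start) that end at (p,0) equals (1/n) times the number of all 𝔖-paths of length n from (0,0) ending at (p,0). -/

import Mathlib

/-- The number of `𝔖`-paths of length `n` from `(0,0)` ending at `(p,0)`. -/
noncomputable def pathCount (S : Finset (ℤ × ℤ)) (p : ℤ) (n : ℕ) : ℕ :=
  Nat.card {l : List (ℤ × ℤ) // l.length = n ∧ (∀ s ∈ l, s ∈ S) ∧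
    (l.map Prod.fst).sum = p ∧ (l.map Prod.snd).sum = 0}

/-- The number of walks of length `n` on the half plane avoiding the half line
that end at `(p,0)`: paths with steps in `𝔖` starting at `(0,0)` that never
visit a point with negative `y`-coordinate and never visit a point `(-k,0)`,
`k ≥ 0`, after the start. -/
noncomputable def halfPlaneSlitCount (S : Finset (ℤ × ℤ)) (p : ℤ) (n : ℕ) : ℕ :=
  Nat.card {l : List (ℤ × ℤ) // l.length = n ∧ (∀ s ∈ l, s ∈ S) ∧
    (l.map Prod.fst).sum = p ∧ (l.map Prod.snd).sum = 0 ∧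
    (∀ i : ℕ, 0 ≤ ((l.take i).map Prod.snd).sum) ∧
    ∀ i : ℕ, 0 < i → i ≤ l.length →
      ¬(((l.take i).map Prod.snd).sum = 0 ∧ ((l.take i).map Prod.fst).sum ≤ 0)}

set_option linter.unusedVariables false


lemma sum_drop (u : List ℤ) (a : ℕ) : (u.drop a).sum = u.sum - (u.take a).sum := by
  have h := congrArg List.sum (List.take_append_drop a u)
  rw [List.sum_append] at h; linarith

lemma sum_take_rotate (w : List ℤ) {a i : ℕ} (ha : a ≤ w.length) (hi : i ≤ w.length) :
    ((w.rotate a).take i).sum =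
      if a + i ≤ w.length then (w.take (a+i)).sum - (w.take a).sum
      else w.sum - (w.take a).sum + (w.take (a + i - w.length)).sum := by
  rw [List.rotate_eq_drop_append_take ha, List.take_append, List.sum_append]
  have h1 : List.take i (w.drop a) = List.drop a (w.take (a+i)) := by
    rw [List.drop_take]; congr 1; omega
  rw [h1, sum_drop, List.take_take, List.length_drop]
  have hmin : min a (a+i) = a := by omega
  rw [hmin]
  by_cases h : a + i ≤ w.length
  · have h0 : i - (w.length - a) = 0 := by omega
    rw [if_pos h, h0]
    simp
  · rw [if_neg h, List.take_of_length_le (by omega : w.length ≤ a + i), List.take_take]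
    have h2 : min (i - (w.length - a)) a = a + i - w.length := by omega
    rw [h2]

lemma sum_map_rotate (l : List (ℤ×ℤ)) (f : ℤ×ℤ → ℤ) (a : ℕ) :
    ((l.rotate a).map f).sum = (l.map f).sum := by
  rw [List.map_rotate]; exact (List.rotate_perm _ _).sum_eq

def pX (l : List (ℤ × ℤ)) (i : ℕ) : ℤ := ((l.map Prod.fst).take i).sum
def pY (l : List (ℤ × ℤ)) (i : ℕ) : ℤ := ((l.map Prod.snd).take i).sum

lemma pX_zero (l : List (ℤ × ℤ)) : pX l 0 = 0 := by simp [pX]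
lemma pY_zero (l : List (ℤ × ℤ)) : pY l 0 = 0 := by simp [pY]
lemma pX_len (l : List (ℤ × ℤ)) : pX l l.length = (l.map Prod.fst).sum := by
  rw [pX, List.take_of_length_le (by simp)]
lemma pY_len (l : List (ℤ × ℤ)) : pY l l.length = (l.map Prod.snd).sum := by
  rw [pY, List.take_of_length_le (by simp)]

lemma pX_rotate (l : List (ℤ×ℤ)) {a i : ℕ} (ha : a ≤ l.length) (hi : i ≤ l.length) :
    pX (l.rotate a) i = if a + i ≤ l.length then pX l (a+i) - pX l a
      else (l.map Prod.fst).sum - pX l a + pX l (a + i - l.length) := by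
  unfold pX
  rw [List.map_rotate]
  have := sum_take_rotate (l.map Prod.fst) (a := a) (i := i) (by simpa) (by simpa)
  simpa using this

lemma pY_rotate (l : List (ℤ×ℤ)) {a i : ℕ} (ha : a ≤ l.length) (hi : i ≤ l.length) :
    pY (l.rotate a) i = if a + i ≤ l.length then pY l (a+i) - pY l a
      else (l.map Prod.snd).sum - pY l a + pY l (a + i - l.length) := by
  unfold pY
  rw [List.map_rotate]
  have := sum_take_rotate (l.map Prod.snd) (a := a) (i := i) (by simpa) (by simpa)
  simpa using this

def IsGood (l : List (ℤ × ℤ)) : Prop :=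
  (∀ i : ℕ, 0 ≤ ((l.take i).map Prod.snd).sum) ∧
    ∀ i : ℕ, 0 < i → i ≤ l.length →
      ¬(((l.take i).map Prod.snd).sum = 0 ∧ ((l.take i).map Prod.fst).sum ≤ 0)

lemma isGood_iff' (l : List (ℤ × ℤ)) : IsGood l ↔
    ((∀ i : ℕ, 0 ≤ pY l i) ∧
      ∀ i : ℕ, 0 < i → i ≤ l.length → ¬(pY l i = 0 ∧ pX l i ≤ 0)) := by
  unfold IsGood pX pY
  simp only [List.map_take]

lemma isGood_rotate_iff {l : List (ℤ×ℤ)} {p : ℤ} {a : ℕ} (ha : a ≤ l.length)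
    (hX : (l.map Prod.fst).sum = p) (hY : (l.map Prod.snd).sum = 0) :
    IsGood (l.rotate a) ↔
      ((∀ k, k ≤ l.length → pY l a ≤ pY l k) ∧
       (∀ k, a < k → k ≤ l.length → pY l k = pY l a → pX l a < pX l k) ∧
       (∀ j, 0 < j → j ≤ a → pY l j = pY l a → pX l a < p + pX l j)) := by
  rw [isGood_iff', List.length_rotate]
  constructor
  · rintro ⟨h1, h2⟩
    refine ⟨?_, ?_, ?_⟩
    · intro k hk
      rcases le_or_gt a k with h | h
      · have hh := h1 (k - a)
        rw [pY_rotate l ha (by omega), if_pos (by omega)] at hh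
        have e : a + (k - a) = k := by omega
        rw [e] at hh; linarith
      · rcases Nat.eq_zero_or_pos k with rfl | hk0
        · have hh := h1 (l.length - a)
          rw [pY_rotate l ha (by omega), if_pos (by omega)] at hh
          have e : a + (l.length - a) = l.length := by omega
          rw [e, pY_len, hY] at hh
          rw [pY_zero]; linarith
        · have hh := h1 (l.length - a + k)
          rw [pY_rotate l ha (by omega), if_neg (by omega)] at hh
          have e : a + (l.length - a + k) - l.length = k := by omega
          rw [e, hY] at hh; linarith
    · intro k hak hkn hYk
      have hh := h2 (k - a) (by omega) (by omega)
      rw [pY_rotate l ha (by omega), pX_rotate l ha (by omega),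
        if_pos (by omega : a + (k - a) ≤ l.length),
        if_pos (by omega : a + (k - a) ≤ l.length)] at hh
      have e : a + (k - a) = k := by omega
      rw [e] at hh
      push_neg at hh
      have := hh (by linarith)
      linarith
    · intro j hj hja hYj
      have hh := h2 (l.length - a + j) (by omega) (by omega)
      rw [pY_rotate l ha (by omega), pX_rotate l ha (by omega),
        if_neg (by omega : ¬ (a + (l.length - a + j) ≤ l.length)),
        if_neg (by omega : ¬ (a + (l.length - a + j) ≤ l.length))] at hh
      have e : a + (l.length - a + j) - l.length = j := by omega
      rw [e, hX, hY] at hh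
      push_neg at hh
      have := hh (by linarith)
      linarith
  · rintro ⟨c1, c2, c3⟩
    constructor
    · intro i
      rcases le_or_gt i l.length with hi | hi
      · rw [pY_rotate l ha hi]
        by_cases h : a + i ≤ l.length
        · rw [if_pos h]; have := c1 (a+i) h; linarith
        · rw [if_neg h, hY]; have := c1 (a + i - l.length) (by omega); linarith
      · have he : pY (l.rotate a) i = 0 := by
          unfold pY
          rw [List.take_of_length_le (by simp; omega), List.map_rotate,
            (List.rotate_perm _ _).sum_eq, hY]
        rw [he]
    · intro i hi0 hin
      rw [pY_rotate l ha hin, pX_rotate l ha hin]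
      by_cases h : a + i ≤ l.length
      · rw [if_pos h, if_pos h]
        rintro ⟨hy, hx⟩
        have := c2 (a+i) (by omega) h (by linarith)
        linarith
      · rw [if_neg h, if_neg h, hX, hY]
        rintro ⟨hy, hx⟩
        have := c3 (a+i-l.length) (by omega) (by omega) (by linarith)
        linarith

lemma exists_good_rotate {p : ℤ} (hp : 0 < p) {l : List (ℤ×ℤ)} (hn : 0 < l.length)
    (hX : (l.map Prod.fst).sum = p) (hY : (l.map Prod.snd).sum = 0) :
    ∃ a, a < l.length ∧ IsGood (l.rotate a) := by
  classical
  set n := l.length with hnn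
  have hT : (Finset.range (n+1)).Nonempty := ⟨0, by simp⟩
  set M := (Finset.range (n+1)).inf' hT (pY l) with hM
  have hM_le : ∀ k, k ≤ n → M ≤ pY l k := fun k hk =>
    Finset.inf'_le _ (Finset.mem_range.mpr (by omega))
  have hYn : pY l n = 0 := by rw [hnn, pY_len, hY]
  set F := (Finset.range n).filter (fun k => pY l k = M) with hF
  have hFne : F.Nonempty := by
    obtain ⟨k0, hk0mem, hk0⟩ := Finset.exists_mem_eq_inf' hT (pY l)
    have hk0n : k0 ≤ n := by simpa using Nat.lt_succ_iff.mp (Finset.mem_range.mp hk0mem)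
    rcases lt_or_eq_of_le hk0n with h | h
    · exact ⟨k0, Finset.mem_filter.mpr ⟨Finset.mem_range.mpr h, hk0.symm⟩⟩
    · refine ⟨0, Finset.mem_filter.mpr ⟨Finset.mem_range.mpr hn, ?_⟩⟩
      rw [pY_zero, hM, hk0, h, hYn]
  set m := F.inf' hFne (pX l) with hm
  have hGne : (F.filter (fun k => pX l k = m)).Nonempty := by
    obtain ⟨k1, hk1mem, hk1⟩ := Finset.exists_mem_eq_inf' hFne (pX l)
    exact ⟨k1, Finset.mem_filter.mpr ⟨hk1mem, hk1.symm⟩⟩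
  set a := (F.filter (fun k => pX l k = m)).max' hGne with haa
  have haG : a ∈ F.filter (fun k => pX l k = m) := Finset.max'_mem _ _
  have haF : a ∈ F := (Finset.mem_filter.mp haG).1
  have haX : pX l a = m := (Finset.mem_filter.mp haG).2
  have haY : pY l a = M := (Finset.mem_filter.mp haF).2
  have han : a < n := Finset.mem_range.mp (Finset.mem_filter.mp haF).1
  refine ⟨a, han, (isGood_rotate_iff han.le hX hY).mpr ⟨?_, ?_, ?_⟩⟩
  · intro k hk; rw [haY]; exact hM_le k hk
  · intro k hak hkn hYk
    rcases lt_or_eq_of_le hkn with hk | hk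
    · have hkF : k ∈ F := Finset.mem_filter.mpr ⟨Finset.mem_range.mpr hk, by rw [hYk, haY]⟩
      have h1 : m ≤ pX l k := Finset.inf'_le _ hkF
      have h2 : pX l k ≠ m := by
        intro he
        have := Finset.le_max' (F.filter (fun k => pX l k = m)) k
          (Finset.mem_filter.mpr ⟨hkF, he⟩)
        omega
      rw [haX]; omega
    · subst hk
      have hM0 : M = 0 := by rw [← haY, ← hYk, hYn]
      have h0F : (0:ℕ) ∈ F := Finset.mem_filter.mpr ⟨Finset.mem_range.mpr hn, by
        rw [pY_zero, hM0]⟩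
      have h1 : m ≤ pX l 0 := Finset.inf'_le _ h0F
      rw [pX_zero] at h1
      rw [haX, pX_len, hX]
      omega
  · intro j hj hja hYj
    have hjF : j ∈ F := Finset.mem_filter.mpr ⟨Finset.mem_range.mpr (by omega), by
      rw [hYj, haY]⟩
    have h1 : m ≤ pX l j := Finset.inf'_le _ hjF
    rw [haX]; omega

lemma rotate_back {α : Type*} (l : List α) {i : ℕ} (hi : i < l.length) :
    (l.rotate i).rotate ((l.length - i) % l.length) = l := by
  rw [List.rotate_rotate]
  rcases Nat.eq_zero_or_pos i with rfl | h
  · simp [Nat.mod_self]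
  · have h1 : (l.length - i) % l.length = l.length - i := Nat.mod_eq_of_lt (by omega)
    rw [h1]
    have h2 : i + (l.length - i) = l.length := by omega
    rw [h2, List.rotate_length]

lemma mod_inj {n i1 i2 : ℕ} (h1 : i1 < n) (h2 : i2 < n)
    (h : (n - i1) % n = (n - i2) % n) : i1 = i2 := by
  rcases eq_or_ne i1 0 with rfl | p1
  · rcases eq_or_ne i2 0 with rfl | p2
    · rfl
    · rw [Nat.sub_zero, Nat.mod_self, Nat.mod_eq_of_lt (by omega)] at h; omega
  · rcases eq_or_ne i2 0 with rfl | p2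
    · rw [Nat.sub_zero, Nat.mod_self, Nat.mod_eq_of_lt (by omega)] at h; omega
    · rw [Nat.mod_eq_of_lt (by omega), Nat.mod_eq_of_lt (by omega)] at h; omega

lemma sum_take_drop (u : List ℤ) {a b : ℕ} (hab : a ≤ b) :
    ((u.drop a).take (b-a)).sum = (u.take b).sum - (u.take a).sum := by
  have h := List.take_add (l := u) (i := a) (j := b - a)
  rw [Nat.add_sub_cancel' hab] at h
  rw [h, List.sum_append]; ring

lemma finite_paths (S : Finset (ℤ × ℤ)) (n : ℕ) (P : List (ℤ × ℤ) → Prop) :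
    Finite {l : List (ℤ × ℤ) // l.length = n ∧ (∀ s ∈ l, s ∈ S) ∧ P l} := by
  classical
  let f : {l : List (ℤ × ℤ) // l.length = n ∧ (∀ s ∈ l, s ∈ S) ∧ P l} →
      (Fin n → {s // s ∈ S}) := fun x i =>
    ⟨x.1.get (Fin.cast x.2.1.symm i), x.2.2.1 _ (x.1.get_mem _)⟩
  have hinj : Function.Injective f := by
    intro x y h
    apply Subtype.ext
    apply List.ext_get (by rw [x.2.1, y.2.1])
    intro i h1 h2
    have hi : i < n := by rw [← x.2.1]; exact h1
    have := congrArg Subtype.val (congrFun h ⟨i, hi⟩)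
    simpa [f] using this
  exact Finite.of_injective f hinj

lemma path_prop_rotate {S : Finset (ℤ × ℤ)} {n : ℕ} {p : ℤ} {l : List (ℤ × ℤ)}
    (h : l.length = n ∧ (∀ s ∈ l, s ∈ S) ∧ (l.map Prod.fst).sum = p ∧
      (l.map Prod.snd).sum = 0) (a : ℕ) :
    (l.rotate a).length = n ∧ (∀ s ∈ l.rotate a, s ∈ S) ∧
      ((l.rotate a).map Prod.fst).sum = p ∧ ((l.rotate a).map Prod.snd).sum = 0 := by
  obtain ⟨h1, h2, h3, h4⟩ := h
  exact ⟨by simp [h1], fun s hs => h2 s (List.mem_rotate.mp hs),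
    by rw [sum_map_rotate]; exact h3, by rw [sum_map_rotate]; exact h4⟩

lemma good_rotate_ne_lt {S : Finset (ℤ × ℤ)} {p : ℤ} (hp : 0 < p)
    (hmin : ∀ q : ℤ, 0 < q → (∃ m : ℕ, pathCount S q m ≠ 0) → p ≤ q)
    {l : List (ℤ × ℤ)} (hmem : ∀ s ∈ l, s ∈ S)
    (hX : (l.map Prod.fst).sum = p) (hY : (l.map Prod.snd).sum = 0)
    {a b : ℕ} (ha : a < l.length) (hb : b < l.length)
    (ga : IsGood (l.rotate a)) (gb : IsGood (l.rotate b)) (hab : a < b) : False := by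
  rw [isGood_rotate_iff ha.le hX hY] at ga
  rw [isGood_rotate_iff hb.le hX hY] at gb
  obtain ⟨a1, a2, a3⟩ := ga
  obtain ⟨b1, b2, b3⟩ := gb
  have hYab : pY l b = pY l a := le_antisymm (b1 a ha.le) (a1 b hb.le)
  have h1 : pX l a < pX l b := a2 b hab hb.le hYab
  have h2 : pX l b < p + pX l a := by
    rcases Nat.eq_zero_or_pos a with rfl | ha0
    · have hYb0 : pY l b = 0 := by rw [hYab, pY_zero]
      have := b2 l.length hb (le_refl _) (by rw [pY_len, hY, hYb0])
      rw [pX_len, hX] at this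
      rw [pX_zero]; linarith
    · exact b3 a ha0 hab.le hYab.symm
  set q := pX l b - pX l a with hq
  have hq1 : 0 < q := by omega
  have hq2 : q < p := by omega
  have hwit : pathCount S q (b - a) ≠ 0 := by
    rw [pathCount, Nat.card_ne_zero]
    constructor
    · refine ⟨⟨(l.drop a).take (b - a), ?_, ?_, ?_, ?_⟩⟩
      · rw [List.length_take, List.length_drop]; omega
      · intro s hs
        exact hmem s ((List.drop_sublist _ _).subset ((List.take_sublist _ _).subset hs))
      · rw [List.map_take, List.map_drop, sum_take_drop _ hab.le]
        rfl
      · rw [List.map_take, List.map_drop, sum_take_drop _ hab.le]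
        have : pY l b - pY l a = 0 := by rw [hYab]; ring
        exact this
    · exact finite_paths S (b - a) _
  have := hmin q hq1 ⟨b - a, hwit⟩
  omega

lemma good_rotate_unique {S : Finset (ℤ × ℤ)} {p : ℤ} (hp : 0 < p)
    (hmin : ∀ q : ℤ, 0 < q → (∃ m : ℕ, pathCount S q m ≠ 0) → p ≤ q)
    {l : List (ℤ × ℤ)} (hmem : ∀ s ∈ l, s ∈ S)
    (hX : (l.map Prod.fst).sum = p) (hY : (l.map Prod.snd).sum = 0)
    {a b : ℕ} (ha : a < l.length) (hb : b < l.length)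
    (ga : IsGood (l.rotate a)) (gb : IsGood (l.rotate b)) : a = b := by
  rcases lt_trichotomy a b with h | h | h
  · exact absurd (good_rotate_ne_lt hp hmin hmem hX hY ha hb ga gb h) not_false
  · exact h
  · exact absurd (good_rotate_ne_lt hp hmin hmem hX hY hb ha gb ga h) not_false

/-- **Theorem 4.4 (walks on the half plane avoiding a half line).**
Let `𝔖` be a finite step set and `p` the smallest positive integer such that
some `𝔖`-path from `(0,0)` ends at `(p,0)`.  Then the number of walks of
length `n` on the half plane avoiding the half line ending at `(p,0)` equals
`1/n` times the number of all `𝔖`-paths of length `n` ending at `(p,0)`. -/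
theorem half_plane_half_line_walks (S : Finset (ℤ × ℤ)) (p : ℤ)
    (hp : 0 < p)
    (hex : ∃ n : ℕ, pathCount S p n ≠ 0)
    (hmin : ∀ q : ℤ, 0 < q → (∃ n : ℕ, pathCount S q n ≠ 0) → p ≤ q) :
    ∀ n : ℕ, halfPlaneSlitCount S p n * n = pathCount S p n := by
  intro n
  rcases Nat.eq_zero_or_pos n with rfl | hn
  · rw [Nat.mul_zero, pathCount]
    have : IsEmpty {l : List (ℤ × ℤ) // l.length = 0 ∧ (∀ s ∈ l, s ∈ S) ∧
        (l.map Prod.fst).sum = p ∧ (l.map Prod.snd).sum = 0} := by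
      constructor
      rintro ⟨l, h0, _, h3, _⟩
      rw [List.length_eq_zero_iff.mp h0] at h3
      simp at h3
      omega
    exact (Nat.card_of_isEmpty).symm
  · let PT := {l : List (ℤ × ℤ) // l.length = n ∧ (∀ s ∈ l, s ∈ S) ∧
      (l.map Prod.fst).sum = p ∧ (l.map Prod.snd).sum = 0}
    let GT := {l : List (ℤ × ℤ) // l.length = n ∧ (∀ s ∈ l, s ∈ S) ∧
      (l.map Prod.fst).sum = p ∧ (l.map Prod.snd).sum = 0 ∧
      (∀ i : ℕ, 0 ≤ ((l.take i).map Prod.snd).sum) ∧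
      ∀ i : ℕ, 0 < i → i ≤ l.length →
        ¬(((l.take i).map Prod.snd).sum = 0 ∧ ((l.take i).map Prod.fst).sum ≤ 0)}
    let Φ : GT × Fin n → PT := fun x =>
      ⟨x.1.1.rotate x.2.1,
        path_prop_rotate ⟨x.1.2.1, x.1.2.2.1, x.1.2.2.2.1, x.1.2.2.2.2.1⟩ x.2.1⟩
    have hinj : Function.Injective Φ := by
      rintro ⟨⟨w1, hw1⟩, ⟨i1, hi1⟩⟩ ⟨⟨w2, hw2⟩, ⟨i2, hi2⟩⟩ h
      have hl : w1.rotate i1 = w2.rotate i2 := congrArg Subtype.val h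
      have hn1 : w1.length = n := hw1.1
      have hn2 : w2.length = n := hw2.1
      have e1 := rotate_back w1 (show i1 < w1.length by rw [hn1]; exact hi1)
      rw [hn1] at e1
      have e2 := rotate_back w2 (show i2 < w2.length by rw [hn2]; exact hi2)
      rw [hn2] at e2
      have hpr := path_prop_rotate (n := n) (p := p) (S := S)
        ⟨hw1.1, hw1.2.1, hw1.2.2.1, hw1.2.2.2.1⟩ i1
      have hLlen : (w1.rotate i1).length = n := hpr.1
      have hgood1 : IsGood ((w1.rotate i1).rotate ((n - i1) % n)) := by
        rw [e1]; exact ⟨hw1.2.2.2.2.1, hw1.2.2.2.2.2⟩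
      have hgood2 : IsGood ((w1.rotate i1).rotate ((n - i2) % n)) := by
        rw [hl, e2]; exact ⟨hw2.2.2.2.2.1, hw2.2.2.2.2.2⟩
      have hmod1 : (n - i1) % n < (w1.rotate i1).length := by
        rw [hLlen]; exact Nat.mod_lt _ (by omega)
      have hmod2 : (n - i2) % n < (w1.rotate i1).length := by
        rw [hLlen]; exact Nat.mod_lt _ (by omega)
      have heq : (n - i1) % n = (n - i2) % n :=
        good_rotate_unique hp hmin hpr.2.1 hpr.2.2.1 hpr.2.2.2
          hmod1 hmod2 hgood1 hgood2
      have hii : i1 = i2 := mod_inj hi1 hi2 heq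
      have hww : w1 = w2 := by
        rw [← e1, ← e2, ← hl, hii]
      subst hii
      subst hww
      rfl
    have hsurj : Function.Surjective Φ := by
      rintro ⟨l, hl⟩
      have hlen : l.length = n := hl.1
      have hpos : 0 < l.length := by omega
      obtain ⟨a, han, hgood⟩ := exists_good_rotate hp hpos hl.2.2.1 hl.2.2.2
      refine ⟨⟨⟨l.rotate a, ?_⟩, ⟨(n - a) % n, Nat.mod_lt _ (by omega)⟩⟩, ?_⟩
      · have hpr := path_prop_rotate (n := n) (p := p) (S := S)
          ⟨hl.1, hl.2.1, hl.2.2.1, hl.2.2.2⟩ a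
        exact ⟨hpr.1, hpr.2.1, hpr.2.2.1, hpr.2.2.2, hgood.1, hgood.2⟩
      · apply Subtype.ext
        show (l.rotate a).rotate ((n - a) % n) = l
        rw [← hlen]
        exact rotate_back l han
    have hcard := Nat.card_congr (Equiv.ofBijective Φ ⟨hinj, hsurj⟩)
    rw [Nat.card_prod] at hcard
    have hfin : Nat.card (Fin n) = n := by simp [Nat.card_eq_fintype_card]
    rw [hfin] at hcard
    exact hcard
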